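/- Let ν be a singular cardinal of uncountable cofinality in V which acquires countable cofinality in a larger universe (abstractly: let ν⁺ be a regular cardinal and let T₀, T₁ partition the limit ordinals below ν⁺, with every ordinal in T₁ of countable cofinality). Suppose that for each pair (λ, i) with λ < ν regular and i < ν there is a partial square sequence ⟨C^{λ,i}_γ : γ ∈ S^{λ,i}⟩ such that T₀ ⊆ ⋃_{λ,i} S^{λ,i}. Then there is a □*_ν-sequence on ν⁺: namely, assigning to each γ ∈ T₀ the set 𝒞_γ = {C^{λ,i}_{γ'} ∩ γ : γ a limit point of C^{λ,i}_{γ'}} and to each γ ∈ T₁ a single cofinal ω-sequence yields a coherent sequence with |𝒞_γ| ≤ ν for all γ. -/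

import Mathlib

universe u

/-- `C` is club in `δ`: unbounded in `δ` and closed under suprema of its
bounded subsets. -/
def IsClubIn (C : Set Ordinal.{u}) (δ : Ordinal.{u}) : Prop :=
  (∀ a < δ, ∃ b ∈ C, a ≤ b ∧ b < δ) ∧
  (∀ a < δ, a ≠ 0 → a = sSup (C ∩ Set.Iio a) → a ∈ C)

/-- `β` is a limit point of `c`. -/
def IsLimPt (β : Ordinal.{u}) (c : Set Ordinal.{u}) : Prop :=
  β ≠ 0 ∧ β = sSup (c ∩ Set.Iio β)

/-- The order type of a set of ordinals. -/
noncomputable def otp (s : Set Ordinal.{u}) : Ordinal.{u + 1} :=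
  Ordinal.type (Subrel ((· < ·) : Ordinal.{u} → Ordinal.{u} → Prop) (· ∈ s))

namespace Stmt4Aux

open Set Ordinal Cardinal

lemma otp_mono {s t : Set Ordinal.{u}} (h : s ⊆ t) : otp s ≤ otp t := by
  rw [otp, otp, Ordinal.type_le_iff']
  exact ⟨⟨⟨Set.inclusion h, Set.inclusion_injective h⟩, Iff.rfl⟩⟩

lemma bdd_inter_Iio (s : Set Ordinal.{u}) (γ : Ordinal.{u}) : BddAbove (s ∩ Set.Iio γ) :=
  ⟨γ, fun _ hx => le_of_lt hx.2⟩

/-- a club in a limit ordinal has that ordinal as a limit point -/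
lemma isLimPt_of_club {c : Set Ordinal.{u}} {γ : Ordinal.{u}} (h : IsClubIn c γ)
    (hγ : Order.IsSuccLimit γ) : IsLimPt γ c := by
  refine ⟨hγ.ne_bot, le_antisymm ?_ ?_⟩
  · by_contra hlt
    push_neg at hlt
    obtain ⟨b, hb, hsb, hbγ⟩ := h.1 (sSup (c ∩ Set.Iio γ) + 1) (hγ.succ_lt hlt)
    have : b ≤ sSup (c ∩ Set.Iio γ) := le_csSup (bdd_inter_Iio c γ) ⟨hb, hbγ⟩
    exact absurd (hsb.trans this) (by simp)
  · rcases Set.eq_empty_or_nonempty (c ∩ Set.Iio γ) with he | he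
    · rw [he, csSup_empty]; exact bot_le
    · exact csSup_le he fun x hx => le_of_lt hx.2

/-- a set with `γ` as limit point is unbounded in `γ` -/
lemma unbounded_of_limPt {c : Set Ordinal.{u}} {γ : Ordinal.{u}} (h : IsLimPt γ c) :
    ∀ a < γ, ∃ b ∈ c, a ≤ b ∧ b < γ := by
  intro a ha
  by_contra hc
  push_neg at hc
  have hle : sSup (c ∩ Set.Iio γ) ≤ a := by
    rcases Set.eq_empty_or_nonempty (c ∩ Set.Iio γ) with he | he
    · rw [he, csSup_empty]; exact bot_le
    · refine csSup_le he fun x hx => ?_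
      by_contra hxa
      push_neg at hxa
      exact absurd hx.2 (not_lt_of_ge (hc x hx.1 hxa.le))
  rw [h.2] at ha
  exact absurd hle (not_le_of_gt ha)

/-- ω-sequence for countable-cofinality limits -/
lemma exists_omega_seq {γ : Ordinal.{u}} (hcof : Ordinal.cof γ = Cardinal.aleph0) :
    ∃ g : ℕ → Ordinal.{u}, StrictMono g ∧ (∀ n, g n < γ) ∧ ∀ a < γ, ∃ n, a ≤ g n := by
  obtain ⟨f, hf⟩ := Ordinal.exists_fundamental_sequence γ
  have hω : γ.cof.ord = Ordinal.omega0 := by rw [hcof, Cardinal.ord_aleph0]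
  have hn : ∀ n : ℕ, (n : Ordinal.{u}) < γ.cof.ord := fun n => hω ▸ Ordinal.nat_lt_omega0 n
  refine ⟨fun n => f n (hn n), fun m n hmn => hf.2.1 _ _ ?_, fun n => ?_, ?_⟩
  · exact_mod_cast hmn
  · rw [← hf.2.2]; exact Ordinal.lt_blsub _ _ _
  · intro a ha
    rw [← hf.2.2, Ordinal.lt_blsub_iff] at ha
    obtain ⟨i, hi, hai⟩ := ha
    obtain ⟨n, rfl⟩ := Ordinal.lt_omega0.1 (hω ▸ hi)
    exact ⟨n, hai⟩

/-- the chosen ω-sequence -/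
noncomputable def omegaSeq (γ : Ordinal.{u}) : ℕ → Ordinal.{u} :=
  if h : Ordinal.cof γ = Cardinal.aleph0 then (exists_omega_seq h).choose
  else fun _ => 0

lemma omegaSeq_spec {γ : Ordinal.{u}} (h : Ordinal.cof γ = Cardinal.aleph0) :
    StrictMono (omegaSeq γ) ∧ (∀ n, omegaSeq γ n < γ) ∧ ∀ a < γ, ∃ n, a ≤ omegaSeq γ n := by
  rw [omegaSeq, dif_pos h]
  exact (exists_omega_seq h).choose_spec

/-- intersections with `Iio a` of the range of the ω-sequence are finite -/
lemma range_inter_finite {γ a : Ordinal.{u}} {g : ℕ → Ordinal.{u}} (hmono : StrictMono g)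
    (hub : ∀ b < γ, ∃ n, b ≤ g n) (ha : a < γ) : (Set.range g ∩ Set.Iio a).Finite := by
  obtain ⟨k, hk⟩ := hub a ha
  refine Set.Finite.subset ((Set.finite_Iio k).image g) ?_
  rintro x ⟨⟨n, rfl⟩, hx⟩
  exact ⟨n, hmono.lt_iff_lt.1 (lt_of_lt_of_le hx hk), rfl⟩

/-- the range of the ω-sequence has no limit points below γ -/
lemma range_no_limPt {γ β : Ordinal.{u}} {g : ℕ → Ordinal.{u}} (hmono : StrictMono g)
    (hub : ∀ b < γ, ∃ n, b ≤ g n) (hβ : β < γ) (hβ0 : β ≠ 0)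
    (h : β = sSup (Set.range g ∩ Set.Iio β)) : False := by
  rcases Set.eq_empty_or_nonempty (Set.range g ∩ Set.Iio β) with he | he
  · rw [he, csSup_empty] at h
    exact hβ0 h
  · have hfin : (Set.range g ∩ Set.Iio β).Finite := range_inter_finite hmono hub hβ
    have hm := he.csSup_mem hfin
    rw [← h] at hm
    exact lt_irrefl β hm.2

/-- the order type of the range of a strictly monotone ℕ-sequence is at most ω -/
lemma otp_range_le_omega0 {g : ℕ → Ordinal.{u}} (hmono : StrictMono g) :
    otp (Set.range g) ≤ Ordinal.omega0.{u+1} := by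
  have hemb : Nonempty
      ((Subrel ((· < ·) : Ordinal.{u} → Ordinal.{u} → Prop) (· ∈ Set.range g)) ↪r
        ((· < ·) : ℕ → ℕ → Prop)) := by
    have hsel : ∀ x : ↥(Set.range g), g x.2.choose = x.1 := fun x => x.2.choose_spec
    refine ⟨RelEmbedding.ofMonotone (fun x => x.2.choose) ?_⟩
    intro a b hab
    have : g a.2.choose < g b.2.choose := by rw [hsel a, hsel b]; exact hab
    exact hmono.lt_iff_lt.1 this
  calc otp (Set.range g)
      = Ordinal.lift.{u+1} (otp (Set.range g)) := (Ordinal.lift_id _).symm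
    _ ≤ Ordinal.lift.{u+1} (Ordinal.type ((· < ·) : ℕ → ℕ → Prop)) :=
        Ordinal.lift_type_le.{u+1, 0, u+1}.2 ⟨hemb.some.collapse⟩
    _ = Ordinal.omega0.{u+1} := by rw [Ordinal.type_nat_lt, Ordinal.lift_omega0]

/-- the "ω-sequence" part of the weak square family -/
def Bfam (γ : Ordinal.{u}) : Set (Set Ordinal.{u}) :=
  {c | Ordinal.cof γ = Cardinal.aleph0 ∧ c = Set.range (omegaSeq γ)}

lemma Bfam_subsingleton (γ : Ordinal.{u}) : (Bfam γ).Subsingleton := by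
  rintro c₁ ⟨-, rfl⟩ c₂ ⟨-, rfl⟩; rfl

lemma Bfam_club {ν : Cardinal.{u}} (hν : Cardinal.aleph0 ≤ ν) {γ : Ordinal.{u}}
    (hγ : Order.IsSuccLimit γ) {c : Set Ordinal.{u}} (hc : c ∈ Bfam γ) :
    IsClubIn c γ ∧ otp c ≤ Ordinal.lift.{u+1} ν.ord := by
  obtain ⟨hcof, rfl⟩ := hc
  obtain ⟨hmono, hlt, hub⟩ := omegaSeq_spec hcof
  refine ⟨⟨fun a ha => ?_, fun a ha ha0 hsup => ?_⟩, ?_⟩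
  · obtain ⟨n, hn⟩ := hub a ha
    exact ⟨omegaSeq γ n, Set.mem_range_self n, hn, hlt n⟩
  · exact absurd hsup (fun hsup => range_no_limPt hmono hub ha ha0 hsup)
  · refine (otp_range_le_omega0 hmono).trans ?_
    have h1 : Ordinal.omega0.{u} ≤ ν.ord := by
      rw [← Cardinal.ord_aleph0]; exact Cardinal.ord_le_ord.2 hν
    calc Ordinal.omega0.{u+1} = Ordinal.lift.{u+1} Ordinal.omega0.{u} := Ordinal.lift_omega0.symm
      _ ≤ Ordinal.lift.{u+1} ν.ord := Ordinal.lift_le.2 h1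

lemma Bfam_no_limPt {γ β : Ordinal.{u}} (hβγ : β < γ) (hβ : Order.IsSuccLimit β)
    {c : Set Ordinal.{u}} (hc : c ∈ Bfam γ) (h : IsLimPt β c) : False := by
  obtain ⟨hcof, rfl⟩ := hc
  obtain ⟨hmono, -, hub⟩ := omegaSeq_spec hcof
  exact range_no_limPt hmono hub hβγ hβ.ne_bot h.2

/-- the "partial squares" part of the weak square family -/
def Afam (ν : Cardinal.{u}) (S : Cardinal.{u} → Ordinal.{u} → Set Ordinal.{u})
    (C : Cardinal.{u} → Ordinal.{u} → Ordinal.{u} → Set Ordinal.{u}) (γ : Ordinal.{u}) :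
    Set (Set Ordinal.{u}) :=
  {c | ∃ lam i γ', lam < ν ∧ lam.IsRegular ∧ i < ν.ord ∧ γ' ∈ S lam i ∧ γ ≤ γ' ∧
      IsLimPt γ (C lam i γ') ∧ c = C lam i γ' ∩ Set.Iio γ}

variable {ν : Cardinal.{u}} {S : Cardinal.{u} → Ordinal.{u} → Set Ordinal.{u}}
  {C : Cardinal.{u} → Ordinal.{u} → Ordinal.{u} → Set Ordinal.{u}}

lemma Afam_club
    (hclub : ∀ lam i γ, lam < ν → lam.IsRegular → i < ν.ord → γ ∈ S lam i →
      IsClubIn (C lam i γ) γ ∧ otp (C lam i γ) = Ordinal.lift.{u + 1} lam.ord)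
    {γ : Ordinal.{u}} {c : Set Ordinal.{u}} (hc : c ∈ Afam ν S C γ) :
    IsClubIn c γ ∧ otp c ≤ Ordinal.lift.{u+1} ν.ord := by
  obtain ⟨lam, i, γ', hlam, hreg, hi, hS, hγγ', hlp, rfl⟩ := hc
  refine ⟨⟨fun a ha => ?_, fun a ha ha0 hsup => ?_⟩, ?_⟩
  · obtain ⟨b, hb, hab, hbγ⟩ := unbounded_of_limPt hlp a ha
    exact ⟨b, ⟨hb, hbγ⟩, hab, hbγ⟩
  · have heq : C lam i γ' ∩ Set.Iio γ ∩ Set.Iio a = C lam i γ' ∩ Set.Iio a := by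
      rw [Set.inter_assoc, Set.Iio_inter_Iio, min_eq_right ha.le]
    rw [heq] at hsup
    exact ⟨(hclub lam i γ' hlam hreg hi hS).1.2 a (ha.trans_le hγγ') ha0 hsup, ha⟩
  · calc otp (C lam i γ' ∩ Set.Iio γ) ≤ otp (C lam i γ') := otp_mono Set.inter_subset_left
      _ = Ordinal.lift.{u+1} lam.ord := (hclub lam i γ' hlam hreg hi hS).2
      _ ≤ Ordinal.lift.{u+1} ν.ord := Ordinal.lift_le.2 (Cardinal.ord_le_ord.2 hlam.le)

lemma Afam_coh {γ : Ordinal.{u}} {c : Set Ordinal.{u}} (hc : c ∈ Afam ν S C γ)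
    {β : Ordinal.{u}} (hβγ : β < γ) (hlp : IsLimPt β c) :
    c ∩ Set.Iio β ∈ Afam ν S C β := by
  obtain ⟨lam, i, γ', hlam, hreg, hi, hS, hγγ', hγlp, rfl⟩ := hc
  have heq : C lam i γ' ∩ Set.Iio γ ∩ Set.Iio β = C lam i γ' ∩ Set.Iio β := by
    rw [Set.inter_assoc, Set.Iio_inter_Iio, min_eq_right hβγ.le]
  have hβlp : IsLimPt β (C lam i γ') := by
    refine ⟨hlp.1, ?_⟩
    have h2 := hlp.2
    rw [heq] at h2
    exact h2
  exact ⟨lam, i, γ', hlam, hreg, hi, hS, hβγ.le.trans hγγ', hβlp, heq⟩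

lemma mk_Afam_le (hν : Cardinal.aleph0 ≤ ν)
    (hcoh : ∀ lam i γ γ', lam < ν → lam.IsRegular → i < ν.ord →
      γ ∈ S lam i → γ' ∈ S lam i → ∀ β,
      IsLimPt β (C lam i γ) → IsLimPt β (C lam i γ') →
      C lam i γ ∩ Set.Iio β = C lam i γ' ∩ Set.Iio β)
    (γ : Ordinal.{u}) :
    Cardinal.mk ↥(Afam ν S C γ) ≤ Cardinal.lift.{u+1} ν := by
  have key : ∀ c : ↥(Afam ν S C γ),
      ∃ p : ↥(Set.Iio ν.ord) × ↥(Set.Iio ν.ord),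
      ∃ lam i γ', lam < ν ∧ lam.IsRegular ∧ i < ν.ord ∧ γ' ∈ S lam i ∧ γ ≤ γ' ∧
        IsLimPt γ (C lam i γ') ∧ c.1 = C lam i γ' ∩ Set.Iio γ ∧
        p.1.1 = lam.ord ∧ p.2.1 = i := by
    rintro ⟨c, lam, i, γ', h1, h2, h3, h4, h5, h6, h7⟩
    exact ⟨(⟨lam.ord, Cardinal.ord_lt_ord.2 h1⟩, ⟨i, h3⟩), lam, i, γ',
      h1, h2, h3, h4, h5, h6, h7, rfl, rfl⟩
  choose F hF using key
  have hinj : Function.Injective F := by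
    intro c₁ c₂ hFeq
    obtain ⟨lam₁, i₁, γ₁, ha1, ha2, ha3, ha4, ha5, ha6, ha7, ha8, ha9⟩ := hF c₁
    obtain ⟨lam₂, i₂, γ₂, hb1, hb2, hb3, hb4, hb5, hb6, hb7, hb8, hb9⟩ := hF c₂
    have hlam : lam₁ = lam₂ := Cardinal.ord_injective (by rw [← ha8, ← hb8, hFeq])
    have hieq : i₁ = i₂ := by rw [← ha9, ← hb9, hFeq]
    subst hlam
    subst hieq
    have hCeq := hcoh lam₁ i₁ γ₁ γ₂ ha1 ha2 ha3 ha4 hb4 γ ha6 hb6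
    apply Subtype.ext
    rw [ha7, hb7, hCeq]
  calc Cardinal.mk ↥(Afam ν S C γ)
      ≤ Cardinal.mk (↥(Set.Iio ν.ord) × ↥(Set.Iio ν.ord)) := Cardinal.mk_le_of_injective hinj
    _ = Cardinal.lift.{u+1} ν * Cardinal.lift.{u+1} ν := by
        simp [Cardinal.mk_prod, Ordinal.mk_Iio_ordinal, Cardinal.card_ord]
    _ = Cardinal.lift.{u+1} ν := Cardinal.mul_eq_self (Cardinal.aleph0_le_lift.2 hν)

end Stmt4Aux

open Stmt4Aux in
/-- gluing partial square sequences (indexed by regular `lam < ν`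
and `i < ν`) covering `T₀`, together with `ω`-sequences on the countable
cofinality part `T₁`, yields a `□*_ν`-sequence on `ν⁺`. -/
theorem stmt_4 (ν : Cardinal.{u}) (hν : Cardinal.aleph0 ≤ ν)
    (hregsucc : (Order.succ ν).IsRegular)
    (T₀ T₁ : Set Ordinal.{u})
    (hpart : ∀ γ : Ordinal.{u}, γ < (Order.succ ν).ord → Order.IsSuccLimit γ →
      ((γ ∈ T₀ ∨ γ ∈ T₁) ∧ ¬(γ ∈ T₀ ∧ γ ∈ T₁)))
    (hT₁ : ∀ γ ∈ T₁, Ordinal.cof γ = Cardinal.aleph0)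
    (S : Cardinal.{u} → Ordinal.{u} → Set Ordinal.{u})
    (C : Cardinal.{u} → Ordinal.{u} → Ordinal.{u} → Set Ordinal.{u})
    (hdom : ∀ lam i γ, lam < ν → lam.IsRegular → i < ν.ord → γ ∈ S lam i →
      γ < (Order.succ ν).ord ∧ Order.IsSuccLimit γ)
    (hclub : ∀ lam i γ, lam < ν → lam.IsRegular → i < ν.ord → γ ∈ S lam i →
      IsClubIn (C lam i γ) γ ∧ otp (C lam i γ) = Ordinal.lift.{u + 1} lam.ord)
    (hcoh : ∀ lam i γ γ', lam < ν → lam.IsRegular → i < ν.ord →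
      γ ∈ S lam i → γ' ∈ S lam i → ∀ β,
      IsLimPt β (C lam i γ) → IsLimPt β (C lam i γ') →
      C lam i γ ∩ Set.Iio β = C lam i γ' ∩ Set.Iio β)
    (hcover : ∀ γ ∈ T₀, ∃ lam i, lam < ν ∧ lam.IsRegular ∧ i < ν.ord ∧ γ ∈ S lam i) :
    ∃ 𝒞 : Ordinal.{u} → Set (Set Ordinal.{u}),
      ∀ γ : Ordinal.{u}, γ < (Order.succ ν).ord → Order.IsSuccLimit γ →
        (𝒞 γ).Nonempty ∧
        Cardinal.mk ↥(𝒞 γ) ≤ Cardinal.lift.{u + 1} ν ∧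
        (∀ c ∈ 𝒞 γ, IsClubIn c γ ∧ otp c ≤ Ordinal.lift.{u + 1} ν.ord) ∧
        (∀ c ∈ 𝒞 γ, ∀ β < γ, Order.IsSuccLimit β → IsLimPt β c → c ∩ Set.Iio β ∈ 𝒞 β) := by
  refine ⟨fun γ => Afam ν S C γ ∪ Bfam γ, fun γ hγsucc hγlim => ⟨?_, ?_, ?_, ?_⟩⟩
  · -- Nonempty
    rcases (hpart γ hγsucc hγlim).1 with h0 | h1
    · obtain ⟨lam, i, hlam, hreg, hi, hS⟩ := hcover γ h0
      exact ⟨C lam i γ ∩ Set.Iio γ, Or.inl ⟨lam, i, γ, hlam, hreg, hi, hS, le_refl γ,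
        isLimPt_of_club (hclub lam i γ hlam hreg hi hS).1 hγlim, rfl⟩⟩
    · exact ⟨Set.range (omegaSeq γ), Or.inr ⟨hT₁ γ h1, rfl⟩⟩
  · -- cardinality
    have h1 : Cardinal.mk ↥(Bfam γ) ≤ 1 :=
      Cardinal.mk_le_one_iff_set_subsingleton.2 (Bfam_subsingleton γ)
    have h2 : Cardinal.mk ↥(Afam ν S C γ) ≤ Cardinal.lift.{u+1} ν := mk_Afam_le hν hcoh γ
    calc Cardinal.mk ↥(Afam ν S C γ ∪ Bfam γ)
        ≤ Cardinal.mk ↥(Afam ν S C γ) + Cardinal.mk ↥(Bfam γ) := Cardinal.mk_union_le _ _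
      _ ≤ Cardinal.lift.{u+1} ν + 1 := add_le_add h2 h1
      _ = Cardinal.lift.{u+1} ν := by
          have : Cardinal.aleph0 ≤ Cardinal.lift.{u+1} ν := Cardinal.aleph0_le_lift.2 hν
          exact Cardinal.add_one_eq this
  · -- clubs
    rintro c (hA | hB)
    · exact Afam_club hclub hA
    · exact Bfam_club hν hγlim hB
  · -- coherence
    rintro c (hA | hB) β hβγ hβlim hlp
    · exact Or.inl (Afam_coh hA hβγ hlp)
    · exact (Bfam_no_limPt hβγ hβlim hB hlp).elim
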